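/- Let T be a contraction on a complex Hilbert space H. Then: (1) for every h ∈ H the limit lim_{k→∞} ‖T*ᵏh‖² exists; (2) there is a unique positive bounded operator P on H such that ⟨P²h, h⟩ = lim_{k→∞} ‖T*ᵏh‖² for all h ∈ H (equivalently, P² is the strong limit of the decreasing sequence Tᵏ T*ᵏ); (3) ‖P T* h‖ = ‖P h‖ for every h ∈ H, so the map P h ↦ P T* h extends to an isometry of the closure of the range of P into itself. -/

import Mathlib

noncomputable section
namespace GammaModel

/-- `P` is the asymptotic limit of `T*`: `P` is positive and
`⟨P²h, h⟩ = lim_k ‖T*ᵏ h‖²` for every `h`. -/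
def IsAsymptoticLimit {H : Type*} [NormedAddCommGroup H] [InnerProductSpace ℂ H]
    [CompleteSpace H] (T P : H →L[ℂ] H) : Prop :=
  P.IsPositive ∧ ∀ h : H,
    Filter.Tendsto (fun k : ℕ => ‖(ContinuousLinearMap.adjoint T ^ k) h‖ ^ 2)
      Filter.atTop (nhds ((@inner ℂ H _ ((P * P) h) h).re))

end GammaModel

open GammaModel ContinuousLinearMap Filter

section Aux

variable {H : Type*} [NormedAddCommGroup H] [InnerProductSpace ℂ H] [CompleteSpace H]

local notation "⟪" x ", " y "⟫" => @inner ℂ H _ x y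

lemma gm_adjoint_pow (T : H →L[ℂ] H) (k : ℕ) :
    adjoint (T ^ k) = (adjoint T) ^ k := by
  rw [← star_eq_adjoint, ← star_eq_adjoint, star_pow]

lemma gm_inner_self (x : H) : ⟪x, x⟫ = ((‖x‖ ^ 2 : ℝ) : ℂ) := by
  exact_mod_cast inner_self_eq_norm_sq_to_K x

lemma gm_pos_of (S : H →L[ℂ] H) (f : H → ℝ) (hf : ∀ x, 0 ≤ f x)
    (h : ∀ x, ⟪S x, x⟫ = ((f x : ℝ) : ℂ)) : 0 ≤ S := by
  rw [nonneg_iff_isPositive, isPositive_iff_complex]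
  intro x
  rw [h x]
  exact ⟨by simp [RCLike.re_to_complex], by simp [RCLike.re_to_complex, hf x]⟩

lemma gm_inner_Ak (T : H →L[ℂ] H) (k : ℕ) (h : H) :
    ⟪(T ^ k * (adjoint T) ^ k) h, h⟫ = ((‖((adjoint T) ^ k) h‖ ^ 2 : ℝ) : ℂ) := by
  rw [ContinuousLinearMap.mul_apply, ← adjoint_inner_right, gm_adjoint_pow, gm_inner_self]

lemma gm_norm_anti {T : H →L[ℂ] H} (hT : ‖T‖ ≤ 1) (h : H) :
    Antitone fun k : ℕ => ‖((adjoint T) ^ k) h‖ := by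
  apply antitone_nat_of_succ_le
  intro k
  calc ‖((adjoint T) ^ (k + 1)) h‖ = ‖adjoint T (((adjoint T) ^ k) h)‖ := by
        rw [pow_succ']; rfl
    _ ≤ ‖adjoint T‖ * ‖((adjoint T) ^ k) h‖ := le_opNorm _ _
    _ ≤ 1 * ‖((adjoint T) ^ k) h‖ := by
        gcongr
        calc ‖adjoint T‖ = ‖T‖ := adjoint.norm_map T
          _ ≤ 1 := hT
    _ = ‖((adjoint T) ^ k) h‖ := one_mul _

lemma gm_sq_anti {T : H →L[ℂ] H} (hT : ‖T‖ ≤ 1) (h : H) :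
    Antitone fun k : ℕ => ‖((adjoint T) ^ k) h‖ ^ 2 := fun n m hnm => by
  exact pow_le_pow_left₀ (norm_nonneg _) (gm_norm_anti hT h hnm) 2

/-- The real limit of `‖T*ᵏh‖²`. -/
def gmL (T : H →L[ℂ] H) (h : H) : ℝ := ⨅ k : ℕ, ‖((adjoint T) ^ k) h‖ ^ 2

lemma gm_tendsto_L {T : H →L[ℂ] H} (hT : ‖T‖ ≤ 1) (h : H) :
    Tendsto (fun k : ℕ => ‖((adjoint T) ^ k) h‖ ^ 2) atTop (nhds (gmL T h)) :=
  tendsto_atTop_ciInf (gm_sq_anti hT h) ⟨0, fun x ⟨k, hk⟩ => hk ▸ by positivity⟩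

lemma gm_L_le {T : H →L[ℂ] H} (h : H) (k : ℕ) :
    gmL T h ≤ ‖((adjoint T) ^ k) h‖ ^ 2 :=
  ciInf_le ⟨0, fun x ⟨k, hk⟩ => hk ▸ by positivity⟩ k

/-- Positivity of `TⁿT*ⁿ - TᵐT*ᵐ` for `n ≤ m`, via the quadratic form. -/
lemma gm_diff_pos {T : H →L[ℂ] H} (hT : ‖T‖ ≤ 1) {n m : ℕ} (hnm : n ≤ m) :
    (0 : H →L[ℂ] H) ≤ T ^ n * (adjoint T) ^ n - T ^ m * (adjoint T) ^ m := by
  refine gm_pos_of _ (fun x => ‖((adjoint T) ^ n) x‖ ^ 2 - ‖((adjoint T) ^ m) x‖ ^ 2)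
    (fun x => sub_nonneg.mpr (gm_sq_anti hT x hnm)) fun x => ?_
  rw [sub_apply, inner_sub_left, gm_inner_Ak, gm_inner_Ak]
  push_cast
  ring

lemma gm_diff_le_one {T : H →L[ℂ] H} (hT : ‖T‖ ≤ 1) {n m : ℕ} (hnm : n ≤ m) :
    T ^ n * (adjoint T) ^ n - T ^ m * (adjoint T) ^ m ≤ 1 := by
  rw [← sub_nonneg]
  refine gm_pos_of _
    (fun x => ‖x‖ ^ 2 - ‖((adjoint T) ^ n) x‖ ^ 2 + ‖((adjoint T) ^ m) x‖ ^ 2)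
    (fun x => ?_) fun x => ?_
  · have h1 : ‖((adjoint T) ^ n) x‖ ^ 2 ≤ ‖x‖ ^ 2 := by
      simpa using gm_sq_anti hT x (Nat.zero_le n)
    nlinarith [sq_nonneg ‖((adjoint T) ^ m) x‖]
  · rw [sub_apply, inner_sub_left, sub_apply, inner_sub_left, gm_inner_Ak, gm_inner_Ak,
      ContinuousLinearMap.one_apply, gm_inner_self]
    push_cast
    ring

/-- Key Cauchy estimate: `‖(Aₙ - Aₘ)h‖² ≤ ‖T*ⁿh‖² - ‖T*ᵐh‖²`. -/
lemma gm_key {T : H →L[ℂ] H} (hT : ‖T‖ ≤ 1) {n m : ℕ} (hnm : n ≤ m) (h : H) :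
    ‖(T ^ n * (adjoint T) ^ n) h - (T ^ m * (adjoint T) ^ m) h‖ ^ 2
      ≤ ‖((adjoint T) ^ n) h‖ ^ 2 - ‖((adjoint T) ^ m) h‖ ^ 2 := by
  set D : H →L[ℂ] H := T ^ n * (adjoint T) ^ n - T ^ m * (adjoint T) ^ m with hD
  have hD0 : (0 : H →L[ℂ] H) ≤ D := gm_diff_pos hT hnm
  have hD1 : D ≤ 1 := gm_diff_le_one hT hnm
  have hsa : IsSelfAdjoint D := ((nonneg_iff_isPositive D).mp hD0).isSelfAdjoint
  have hpow : D ^ 2 ≤ D ^ 1 := CStarAlgebra.pow_antitone hD0 hD1 one_le_two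
  have e1 : ⟪(D ^ 2) h, h⟫ = ((‖D h‖ ^ 2 : ℝ) : ℂ) := by
    rw [sq, ContinuousLinearMap.mul_apply]
    conv_lhs => rw [← hsa.adjoint_eq]
    rw [adjoint_inner_left, hsa.adjoint_eq, gm_inner_self]
  have e2 : ⟪(D ^ 1) h, h⟫
      = ((‖((adjoint T) ^ n) h‖ ^ 2 - ‖((adjoint T) ^ m) h‖ ^ 2 : ℝ) : ℂ) := by
    rw [pow_one, hD, sub_apply, inner_sub_left, gm_inner_Ak, gm_inner_Ak]
    push_cast
    ring
  have hle : (0 : H →L[ℂ] H) ≤ D ^ 1 - D ^ 2 := sub_nonneg.mpr hpow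
  have h2 := ((nonneg_iff_isPositive _).mp hle).inner_nonneg_left h
  rw [sub_apply, inner_sub_left, e1, e2] at h2
  have h3 : ‖D h‖ ^ 2 ≤ ‖((adjoint T) ^ n) h‖ ^ 2 - ‖((adjoint T) ^ m) h‖ ^ 2 := by
    have h4 := Complex.zero_le_real.mp (by rw [← Complex.ofReal_sub] at h2; exact h2)
    linarith
  have hDh : D h = (T ^ n * (adjoint T) ^ n) h - (T ^ m * (adjoint T) ^ m) h := by
    rw [hD, sub_apply]
  rw [← hDh]
  exact h3

lemma gm_norm_sq {Q : H →L[ℂ] H} (hQsa : IsSelfAdjoint Q) (h : H) :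
    ⟪(Q * Q) h, h⟫ = ((‖Q h‖ ^ 2 : ℝ) : ℂ) := by
  rw [ContinuousLinearMap.mul_apply]
  conv_lhs => rw [← hQsa.adjoint_eq]
  rw [adjoint_inner_left, hQsa.adjoint_eq, gm_inner_self]

lemma gm_sq_selfAdjoint {Q : H →L[ℂ] H} (hQsa : IsSelfAdjoint Q) :
    IsSelfAdjoint (Q * Q) := by
  rw [IsSelfAdjoint, star_mul, hQsa.star_eq]

lemma gm_inner_real {S : H →L[ℂ] H} (hsa : IsSelfAdjoint S) (h : H) :
    ⟪S h, h⟫ = (((⟪S h, h⟫).re : ℝ) : ℂ) := by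
  have hsym := (isSelfAdjoint_iff_isSymmetric).mp hsa
  have hc : (starRingEnd ℂ) ⟪S h, h⟫ = ⟪S h, h⟫ := by
    rw [inner_conj_symm]
    exact (hsym h h).symm
  exact (Complex.conj_eq_iff_re.mp hc).symm

lemma gm_L_nonneg (T : H →L[ℂ] H) (h : H) : 0 ≤ gmL T h :=
  le_ciInf fun k => by positivity

end Aux

set_option maxHeartbeats 2000000 in
/-- For a contraction `T` on a complex Hilbert space: (1) `lim_k ‖T*ᵏh‖²`
exists for every `h`; (2) there is a unique positive operator `P` with
`⟨P²h, h⟩ = lim_k ‖T*ᵏh‖²` for all `h`; (3) any such `P` satisfies `‖P T* h‖ = ‖P h‖`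
for all `h` (so `Ph ↦ PT*h` extends to an isometry of `closure (range P)`). -/
theorem asymptotic_limit_exists_unique {H : Type*}
    [NormedAddCommGroup H] [InnerProductSpace ℂ H] [CompleteSpace H]
    (T : H →L[ℂ] H) (hT : ‖T‖ ≤ 1) :
    (∀ h : H, ∃ L : ℝ,
      Tendsto (fun k : ℕ => ‖(adjoint T ^ k) h‖ ^ 2) atTop (nhds L)) ∧
    (∃! P : H →L[ℂ] H, IsAsymptoticLimit T P) ∧
    (∀ P : H →L[ℂ] H, IsAsymptoticLimit T P → ∀ h : H, ‖P (adjoint T h)‖ = ‖P h‖) := by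
  have hlim : ∀ h : H, Tendsto (fun k : ℕ => ‖(adjoint T ^ k) h‖ ^ 2) atTop
      (nhds (gmL T h)) := fun h => gm_tendsto_L hT h
  -- norms of the operators Tᵏ T*ᵏ are at most 1
  have hTk : ∀ k : ℕ, ‖T ^ k‖ ≤ 1 := by
    intro k
    induction k with
    | zero => simpa [ContinuousLinearMap.one_def] using norm_id_le (E := H)
    | succ n ih =>
      calc ‖T ^ (n + 1)‖ = ‖T ^ n * T‖ := by rw [pow_succ]
        _ ≤ ‖T ^ n‖ * ‖T‖ := norm_mul_le _ _
        _ ≤ 1 * 1 := by gcongr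
        _ = 1 := one_mul 1
  have hSk : ∀ k : ℕ, ‖(adjoint T) ^ k‖ ≤ 1 := by
    intro k
    rw [← gm_adjoint_pow]
    calc ‖adjoint (T ^ k)‖ = ‖T ^ k‖ := adjoint.norm_map _
      _ ≤ 1 := hTk k
  have hAk_norm : ∀ (k : ℕ) (x : H), ‖(T ^ k * (adjoint T) ^ k) x‖ ≤ ‖x‖ := by
    intro k x
    calc ‖(T ^ k * (adjoint T) ^ k) x‖ ≤ ‖T ^ k * (adjoint T) ^ k‖ * ‖x‖ := le_opNorm _ _
      _ ≤ (‖T ^ k‖ * ‖(adjoint T) ^ k‖) * ‖x‖ := by gcongr; exact norm_mul_le _ _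
      _ ≤ (1 * 1) * ‖x‖ := by gcongr <;> [exact hTk k; exact hSk k]
      _ = ‖x‖ := by ring
  -- the sequence Tᵏ T*ᵏ h is Cauchy for each h
  have hb0 : ∀ h : H, ∀ N : ℕ, 0 ≤ ‖((adjoint T) ^ N) h‖ ^ 2 - gmL T h :=
    fun h N => sub_nonneg.mpr (gm_L_le h N)
  have hCauchy : ∀ h : H, CauchySeq (fun k : ℕ => (T ^ k * (adjoint T) ^ k) h) := by
    intro h
    apply cauchySeq_of_le_tendsto_0
      (fun N => Real.sqrt (‖((adjoint T) ^ N) h‖ ^ 2 - gmL T h))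
    · have key : ∀ n m N : ℕ, N ≤ n → N ≤ m → n ≤ m →
          dist ((T ^ n * (adjoint T) ^ n) h) ((T ^ m * (adjoint T) ^ m) h)
            ≤ Real.sqrt (‖((adjoint T) ^ N) h‖ ^ 2 - gmL T h) := by
        intro n m N hNn hNm hnm
        rw [dist_eq_norm]
        rw [Real.le_sqrt (norm_nonneg _) (hb0 h N)]
        calc ‖(T ^ n * (adjoint T) ^ n) h - (T ^ m * (adjoint T) ^ m) h‖ ^ 2
            ≤ ‖((adjoint T) ^ n) h‖ ^ 2 - ‖((adjoint T) ^ m) h‖ ^ 2 := gm_key hT hnm h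
          _ ≤ ‖((adjoint T) ^ N) h‖ ^ 2 - gmL T h := by
              have h1 := gm_sq_anti hT h hNn
              have h2 := gm_L_le (T := T) h m
              simp only at h1
              linarith
      intro n m N hNn hNm
      rcases le_total n m with hnm | hmn
      · exact key n m N hNn hNm hnm
      · rw [dist_comm]
        exact key m n N hNm hNn hmn
    · have h0 : Tendsto (fun N : ℕ => ‖((adjoint T) ^ N) h‖ ^ 2 - gmL T h) atTop
          (nhds 0) := by
        simpa using (hlim h).sub (tendsto_const_nhds (x := gmL T h))
      simpa using h0.sqrt
  -- strong limit g of Tᵏ T*ᵏ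
  have hconv : ∀ h : H, ∃ y : H,
      Tendsto (fun k : ℕ => (T ^ k * (adjoint T) ^ k) h) atTop (nhds y) :=
    fun h => cauchySeq_tendsto_of_complete (hCauchy h)
  choose g hg using hconv
  -- g is a continuous linear map
  let A : H →L[ℂ] H := LinearMap.mkContinuous
    { toFun := g
      map_add' := fun x y => tendsto_nhds_unique (hg (x + y))
        (by simpa [map_add] using (hg x).add (hg y))
      map_smul' := fun c x => tendsto_nhds_unique (hg (c • x))
        (by simpa [map_smul] using (hg x).const_smul c) }
    1 (fun x => by
      rw [one_mul]
      exact le_of_tendsto (hg x).norm (Eventually.of_forall fun k => hAk_norm k x))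
  have hA_apply : ∀ x : H, A x = g x := fun x => rfl
  have hA_inner : ∀ h : H, (inner ℂ (A h) h : ℂ) = ((gmL T h : ℝ) : ℂ) := by
    intro h
    have t1 : Tendsto (fun k : ℕ => (inner ℂ ((T ^ k * (adjoint T) ^ k) h) h : ℂ)) atTop
        (nhds (inner ℂ (A h) h)) := (hg h).inner tendsto_const_nhds
    have t2 : Tendsto (fun k : ℕ => (inner ℂ ((T ^ k * (adjoint T) ^ k) h) h : ℂ)) atTop
        (nhds ((gmL T h : ℝ) : ℂ)) := by
      have t := (Complex.continuous_ofReal.tendsto (gmL T h)).comp (hlim h)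
      have hfun : (fun k : ℕ => (inner ℂ ((T ^ k * (adjoint T) ^ k) h) h : ℂ))
          = fun k : ℕ => ((‖((adjoint T) ^ k) h‖ ^ 2 : ℝ) : ℂ) :=
        funext fun k => gm_inner_Ak T k h
      rw [hfun]
      exact t
    exact tendsto_nhds_unique t1 t2
  have hA0 : (0 : H →L[ℂ] H) ≤ A :=
    gm_pos_of A (gmL T) (gm_L_nonneg T) hA_inner
  -- P, the positive square root of A
  set P : H →L[ℂ] H := CFC.sqrt A with hPdef
  have hP0 : (0 : H →L[ℂ] H) ≤ P := CFC.sqrt_nonneg A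
  have hPP : P * P = A := CFC.sqrt_mul_sqrt_self A hA0
  have hPlim : IsAsymptoticLimit T P := by
    refine ⟨(nonneg_iff_isPositive P).mp hP0, fun h => ?_⟩
    have : ((inner ℂ ((P * P) h) h : ℂ)).re = gmL T h := by
      rw [hPP, hA_inner h, Complex.ofReal_re]
    rw [this]
    exact hlim h
  -- the limit value for any asymptotic limit Q
  have hQval : ∀ Q : H →L[ℂ] H, IsAsymptoticLimit T Q → ∀ h : H,
      (inner ℂ ((Q * Q) h) h : ℂ) = ((gmL T h : ℝ) : ℂ) := by
    intro Q hQ h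
    have hre : ((inner ℂ ((Q * Q) h) h : ℂ)).re = gmL T h :=
      tendsto_nhds_unique (hQ.2 h) (hlim h)
    have hsa : IsSelfAdjoint (Q * Q) := gm_sq_selfAdjoint hQ.1.isSelfAdjoint
    rw [gm_inner_real hsa h, hre]
  refine ⟨fun h => ⟨gmL T h, hlim h⟩, ⟨P, hPlim, ?_⟩, ?_⟩
  · -- uniqueness
    intro Q hQ
    have hQ0 : (0 : H →L[ℂ] H) ≤ Q := (nonneg_iff_isPositive Q).mpr hQ.1
    have hQQPP : Q * Q = P * P := by
      have hz : ((Q * Q - P * P : H →L[ℂ] H) : H →ₗ[ℂ] H) = 0 := by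
        apply (inner_map_self_eq_zero _).mp
        intro x
        have : (inner ℂ ((Q * Q - P * P) x) x : ℂ) = 0 := by
          rw [sub_apply, inner_sub_left, hQval Q hQ x, hQval P hPlim x, sub_self]
        simpa [inner_sub_left] using this
      have h5 : (Q * Q - P * P : H →L[ℂ] H) = 0 := by
        ext x
        have := congrFun (congrArg (fun (f : H →ₗ[ℂ] H) => f.toFun) hz) x
        simpa using this
      exact sub_eq_zero.mp h5
    calc Q = CFC.sqrt (Q * Q) := (CFC.sqrt_unique rfl hQ0).symm
      _ = CFC.sqrt (P * P) := by rw [hQQPP]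
      _ = P := CFC.sqrt_unique rfl hP0
  · -- the isometry property
    intro Q hQ h
    have t1 : Tendsto (fun k : ℕ => ‖(adjoint T ^ k) (adjoint T h)‖ ^ 2) atTop
        (nhds (((inner ℂ ((Q * Q) (adjoint T h)) (adjoint T h) : ℂ)).re)) :=
      hQ.2 (adjoint T h)
    have t2 : Tendsto (fun k : ℕ => ‖(adjoint T ^ k) (adjoint T h)‖ ^ 2) atTop
        (nhds (((inner ℂ ((Q * Q) h) h : ℂ)).re)) := by
      have t3 := (hQ.2 h).comp (tendsto_add_atTop_nat 1)
      have : (fun k : ℕ => ‖(adjoint T ^ (k + 1)) h‖ ^ 2)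
          = fun k : ℕ => ‖(adjoint T ^ k) (adjoint T h)‖ ^ 2 := by
        funext k
        have hx : (adjoint T ^ (k + 1)) h = (adjoint T ^ k) (adjoint T h) := by
          rw [pow_succ]; rfl
        rw [hx]
      refine (tendsto_congr fun k => ?_).mp t3
      exact congrFun this k
    have heq : ((inner ℂ ((Q * Q) (adjoint T h)) (adjoint T h) : ℂ)).re
        = ((inner ℂ ((Q * Q) h) h : ℂ)).re := tendsto_nhds_unique t1 t2
    have hsa : IsSelfAdjoint Q := hQ.1.isSelfAdjoint
    have e1 : ((inner ℂ ((Q * Q) (adjoint T h)) (adjoint T h) : ℂ)).re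
        = ‖Q (adjoint T h)‖ ^ 2 := by
      rw [gm_norm_sq hsa, Complex.ofReal_re]
    have e2 : ((inner ℂ ((Q * Q) h) h : ℂ)).re = ‖Q h‖ ^ 2 := by
      rw [gm_norm_sq hsa, Complex.ofReal_re]
    have hsq : ‖Q (adjoint T h)‖ ^ 2 = ‖Q h‖ ^ 2 := by rw [← e1, ← e2, heq]
    have := congrArg Real.sqrt hsq
    rwa [Real.sqrt_sq (norm_nonneg _), Real.sqrt_sq (norm_nonneg _)] at this
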